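/- arXiv:1503.06895 — 2 statements merged into one kernel-verified Lean document; each statement's English description precedes it below -/
import Mathlib

section
/- The map g is not Li-Yorke chaotic. -/
/-- `{x, y}` is a Li-Yorke chaotic pair for `T` if the distances between the iterates
`Tⁿ x` and `Tⁿ y` have positive limsup and zero liminf. -/
def LiYorkePair {X : Type*} [PseudoEMetricSpace X] (T : X → X) (x y : X) : Prop :=
  0 < Filter.limsup (fun n : ℕ => edist (T^[n] x) (T^[n] y)) Filter.atTop ∧
    Filter.liminf (fun n : ℕ => edist (T^[n] x) (T^[n] y)) Filter.atTop = 0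

/-- `T` is Li-Yorke chaotic if there is an uncountable set all of whose pairs of distinct
points are Li-Yorke chaotic pairs for `T`. -/
def LiYorkeChaotic {X : Type*} [PseudoEMetricSpace X] (T : X → X) : Prop :=
  ∃ Γ : Set X, ¬ Γ.Countable ∧ ∀ x ∈ Γ, ∀ y ∈ Γ, x ≠ y → LiYorkePair T x y

/-- The map `g` on `ℂ`. -/
noncomputable def mapG (z : ℂ) : ℂ :=
  if z = 0 then 0 else
    Real.exp 1 * z * Complex.exp (2 * Real.pi * Complex.I * Real.log ‖z‖)

/-- The map `G`, the inverse of `g`, on `ℂ`. -/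
noncomputable def mapGinv (w : ℂ) : ℂ :=
  if w = 0 then 0 else
    (Real.exp 1)⁻¹ * w * Complex.exp (-(2 * Real.pi * Complex.I * Real.log ‖w‖))


lemma abs_expI_aux (r : ℝ) : ‖Complex.exp (2 * Real.pi * Complex.I * r)‖ = 1 := by
  rw [Complex.norm_exp]; simp [Complex.mul_re]

lemma abs_mapG_aux (z : ℂ) : ‖mapG z‖ = Real.exp 1 * ‖z‖ := by
  by_cases hz : z = 0
  · simp [hz, mapG]
  · rw [mapG, if_neg hz, norm_mul, norm_mul, abs_expI_aux, Complex.norm_real, Real.norm_eq_abs,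
      abs_of_pos (Real.exp_pos 1)]
    ring

lemma abs_iter_aux (n : ℕ) (z : ℂ) :
    ‖mapG^[n] z‖ = (Real.exp 1)^n * ‖z‖ := by
  induction n with
  | zero => simp
  | succ n ih => rw [Function.iterate_succ_apply', abs_mapG_aux, ih]; ring

lemma step_aux {a b : ℂ} (h : ‖a‖ = ‖b‖) :
    ‖mapG a - mapG b‖ = Real.exp 1 * ‖a - b‖ := by
  by_cases ha : a = 0
  · have hb : b = 0 := by
      have := h; rw [ha] at this; simpa using this.symm
    simp [ha, hb, mapG]
  · have hb : b ≠ 0 := by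
      intro hb; rw [hb] at h; simp at h; exact ha h
    rw [mapG, mapG, if_neg ha, if_neg hb, ← h]
    have e1 : (Real.exp 1 : ℂ) * a * Complex.exp (2 * Real.pi * Complex.I * Real.log ‖a‖)
        - Real.exp 1 * b * Complex.exp (2 * Real.pi * Complex.I * Real.log ‖a‖)
        = Real.exp 1 * Complex.exp (2 * Real.pi * Complex.I * Real.log ‖a‖) * (a - b) := by
      ring
    rw [e1, norm_mul, norm_mul, abs_expI_aux, Complex.norm_real, Real.norm_eq_abs, abs_of_pos (Real.exp_pos 1)]
    ring

lemma iter_eq_aux {x y : ℂ} (h : ‖x‖ = ‖y‖) (n : ℕ) :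
    ‖mapG^[n] x - mapG^[n] y‖ = (Real.exp 1)^n * ‖x - y‖ := by
  induction n with
  | zero => simp
  | succ n ih =>
    have habs : ‖mapG^[n] x‖ = ‖mapG^[n] y‖ := by
      rw [abs_iter_aux, abs_iter_aux, h]
    rw [Function.iterate_succ_apply', Function.iterate_succ_apply', step_aux habs, ih]
    ring

lemma one_le_exp_pow (n : ℕ) : (1:ℝ) ≤ (Real.exp 1)^n :=
  one_le_pow₀ (by linarith [Real.add_one_le_exp (1:ℝ)])

lemma lower_bound_aux {x y : ℂ} (hxy : x ≠ y) :
    ∃ c : ℝ, 0 < c ∧ ∀ n, c ≤ ‖mapG^[n] x - mapG^[n] y‖ := by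
  by_cases h : ‖x‖ = ‖y‖
  · refine ⟨‖x - y‖, by simpa [sub_eq_zero] using hxy, fun n => ?_⟩
    rw [iter_eq_aux h n]
    nlinarith [one_le_exp_pow n, norm_nonneg (x - y)]
  · refine ⟨|‖x‖ - ‖y‖|, by simpa [sub_eq_zero] using h, fun n => ?_⟩
    have h1 : |‖mapG^[n] x‖ - ‖mapG^[n] y‖|
        ≤ ‖mapG^[n] x - mapG^[n] y‖ := by
      simpa using abs_norm_sub_norm_le (mapG^[n] x) (mapG^[n] y)
    have h2 : |‖mapG^[n] x‖ - ‖mapG^[n] y‖|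
        = (Real.exp 1)^n * |‖x‖ - ‖y‖| := by
      rw [abs_iter_aux, abs_iter_aux, ← mul_sub, abs_mul,
        abs_of_pos (pow_pos (Real.exp_pos 1) n)]
    nlinarith [one_le_exp_pow n, abs_nonneg (‖x‖ - ‖y‖)]

lemma no_pair_aux {x y : ℂ} (hxy : x ≠ y) : ¬ LiYorkePair mapG x y := by
  obtain ⟨c, hc, hb⟩ := lower_bound_aux hxy
  rintro ⟨-, hlim⟩
  have h1 : ENNReal.ofReal c ≤
      Filter.liminf (fun n : ℕ => edist (mapG^[n] x) (mapG^[n] y)) Filter.atTop := by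
    apply Filter.le_liminf_of_le (by isBoundedDefault)
    filter_upwards with n
    rw [edist_dist]
    exact ENNReal.ofReal_le_ofReal (by simpa [Complex.dist_eq] using hb n)
  rw [hlim] at h1
  simp [ENNReal.ofReal_eq_zero] at h1
  linarith

/-- The map `g` is not Li-Yorke chaotic. -/
theorem stmt_10 : ¬ LiYorkeChaotic mapG := by
  rintro ⟨Γ, hΓ, hpair⟩
  by_cases h : ∃ x ∈ Γ, ∃ y ∈ Γ, x ≠ y
  · obtain ⟨x, hx, y, hy, hxy⟩ := h
    exact no_pair_aux hxy (hpair x hx y hy hxy)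
  · push_neg at h
    exact hΓ (Set.Subsingleton.countable (fun a ha b hb => h a ha b hb))
end

section
/- The map G is not Li-Yorke chaotic. -/
lemma abs_mapGinv (w : ℂ) : ‖mapGinv w‖ = (Real.exp 1)⁻¹ * ‖w‖ := by
  unfold mapGinv
  split_ifs with h
  · simp [h]
  · rw [norm_mul, norm_mul, Complex.norm_exp]
    have h1 : (-(2 * (Real.pi:ℂ) * Complex.I * (Real.log ‖w‖ : ℂ))).re = 0 := by
      simp [Complex.mul_re, Complex.mul_im]
    rw [h1, Real.exp_zero, mul_one]
    norm_cast
    rw [Real.norm_eq_abs, abs_of_pos (inv_pos.mpr (Real.exp_pos 1))]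

lemma abs_iter_mapGinv (w : ℂ) (n : ℕ) :
    ‖mapGinv^[n] w‖ = ((Real.exp 1)⁻¹) ^ n * ‖w‖ := by
  induction n with
  | zero => simp
  | succ n ih =>
      rw [Function.iterate_succ_apply', abs_mapGinv, ih, pow_succ]
      ring

lemma orbit_tendsto (w : ℂ) :
    Filter.Tendsto (fun n : ℕ => mapGinv^[n] w) Filter.atTop (nhds 0) := by
  rw [tendsto_zero_iff_norm_tendsto_zero]
  have habs : (fun n : ℕ => ‖mapGinv^[n] w‖) =
      fun n : ℕ => ((Real.exp 1)⁻¹) ^ n * ‖w‖ := by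
    funext n; rw [abs_iter_mapGinv]
  rw [habs]
  have h1 : |(Real.exp 1)⁻¹| < 1 := by
    rw [abs_of_pos (inv_pos.mpr (Real.exp_pos 1))]
    rw [inv_lt_one_iff₀]
    right
    exact lt_of_lt_of_le one_lt_two (by
      have := Real.add_one_le_exp (1 : ℝ); linarith)
  have := (tendsto_pow_atTop_nhds_zero_of_abs_lt_one h1).mul_const ‖w‖
  simpa using this

/-- The map `G` is not Li-Yorke chaotic. -/
theorem stmt_12 : ¬ LiYorkeChaotic mapGinv := by
  rintro ⟨Γ, hΓ, hpair⟩
  have hnt : Γ.Nontrivial := by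
    by_contra hs
    exact hΓ (Set.not_nontrivial_iff.mp hs).countable
  obtain ⟨x, hx, y, hy, hxy⟩ := hnt
  obtain ⟨hpos, _⟩ := hpair x hx y hy hxy
  have hd : Filter.Tendsto (fun n : ℕ => edist (mapGinv^[n] x) (mapGinv^[n] y))
      Filter.atTop (nhds 0) := by
    have := (orbit_tendsto x).edist (orbit_tendsto y)
    simpa using this
  rw [hd.limsup_eq] at hpos
  exact lt_irrefl 0 hpos
end
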